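/- Let Σ_x, Σ̃_e ∈ ℝ^{m×m} be symmetric positive definite matrices and B, L ∈ ℝ^{m×m} diagonal matrices with B² + L² = I. Define A := B Σ_x B + L Σ̃_e L, C := L Σ_x L + B Σ̃_e B, and S := L Σ̃_e B − B Σ_x L. Then A is invertible and det(Σ_x) · det(Σ̃_e) = det(A) · det(C − Sᵀ A⁻¹ S). -/

import Mathlib

open Matrix

lemma diag_symm {m : ℕ} {A : Matrix (Fin m) (Fin m) ℝ} (h : A.IsDiag) : Aᵀ = A :=
  h.isSymm

lemma diag_comm {m : ℕ} {A B : Matrix (Fin m) (Fin m) ℝ} (hA : A.IsDiag) (hB : B.IsDiag) :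
    A * B = B * A := by
  rw [← hA.diagonal_diag, ← hB.diagonal_diag, diagonal_mul_diagonal, diagonal_mul_diagonal]
  simp [mul_comm]

theorem stmt6 {m : ℕ} (Sx Se B L : Matrix (Fin m) (Fin m) ℝ)
    (hSx : Sx.PosDef) (hSe : Se.PosDef) (hB : B.IsDiag) (hL : L.IsDiag)
    (hBL : B * B + L * L = 1) :
    IsUnit (B * Sx * B + L * Se * L).det ∧
    Sx.det * Se.det
      = (B * Sx * B + L * Se * L).det
        * ((L * Sx * L + B * Se * B)
            - (L * Se * B - B * Sx * L)ᵀ * (B * Sx * B + L * Se * L)⁻¹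
              * (L * Se * B - B * Sx * L)).det := by
  have hBt : Bᵀ = B := diag_symm hB
  have hLt : Lᵀ = L := diag_symm hL
  have hSxt : Sxᵀ = Sx := hSx.isHermitian
  have hSet : Seᵀ = Se := hSe.isHermitian
  -- A is positive definite
  have hA : (B * Sx * B + L * Se * L).PosDef := by
    rw [posDef_iff_dotProduct_mulVec]
    constructor
    · show (B * Sx * B + L * Se * L)ᵀ = _
      simp [transpose_add, transpose_mul, hBt, hLt, hSxt, hSet, mul_assoc]
    · intro x hx
      have key : ∀ (M N : Matrix (Fin m) (Fin m) ℝ), Nᵀ = N →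
          dotProduct (star x) ((N * M * N) *ᵥ x)
            = dotProduct (star (N *ᵥ x)) (M *ᵥ (N *ᵥ x)) := by
        intro M N hN
        have hvx : x ᵥ* N = N *ᵥ x := by
          conv_lhs => rw [← hN, vecMul_transpose]
        rw [star_trivial, star_trivial, dotProduct_mulVec, ← vecMul_vecMul, ← vecMul_vecMul,
          hvx, ← dotProduct_mulVec, ← dotProduct_mulVec]
      rw [add_mulVec, dotProduct_add, key Sx B hBt, key Se L hLt]
      have h1 := hSx.posSemidef.dotProduct_mulVec_nonneg (B *ᵥ x)
      have h2 := hSe.posSemidef.dotProduct_mulVec_nonneg (L *ᵥ x)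
      rcases eq_or_ne (B *ᵥ x) 0 with hb | hb
      · have hl : L *ᵥ x ≠ 0 := by
          intro hl
          apply hx
          have : (B * B + L * L) *ᵥ x = 0 := by
            rw [add_mulVec, ← mulVec_mulVec, ← mulVec_mulVec, hb, hl, mulVec_zero,
              mulVec_zero, add_zero]
          rwa [hBL, one_mulVec] at this
        have := hSe.dotProduct_mulVec_pos hl
        rw [hb]
        simpa using this
      · have := hSx.dotProduct_mulVec_pos hb
        linarith
  refine ⟨isUnit_iff_ne_zero.mpr hA.det_pos.ne', ?_⟩
  -- block matrix identity
  set A := B * Sx * B + L * Se * L with hAdef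
  set S := L * Se * B - B * Sx * L with hSdef
  set C := L * Sx * L + B * Se * B with hCdef
  have hU : (fromBlocks B L (-L) B : Matrix (Fin m ⊕ Fin m) (Fin m ⊕ Fin m) ℝ)
      * (fromBlocks B L (-L) B)ᵀ = 1 := by
    rw [fromBlocks_transpose, fromBlocks_multiply, hBt, hLt, transpose_neg, hLt]
    have : B * -L + L * B = 0 := by
      rw [mul_neg, diag_comm hL hB, neg_add_cancel]
    have h2 : -L * B + B * L = 0 := by
      rw [neg_mul, diag_comm hB hL, neg_add_cancel]
    rw [this, h2, hBL, show -L * -L + B * B = 1 by rw [neg_mul_neg]; rw [add_comm] at hBL; exact hBL]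
    exact fromBlocks_one
  have hM : (fromBlocks A S Sᵀ C : Matrix (Fin m ⊕ Fin m) (Fin m ⊕ Fin m) ℝ)
      = (fromBlocks B L (-L) B) * (fromBlocks Sx 0 0 Se) * (fromBlocks B L (-L) B)ᵀ := by
    rw [fromBlocks_transpose, fromBlocks_multiply, fromBlocks_multiply, hBt, hLt,
      transpose_neg, hLt]
    congr 1 <;>
      simp [hAdef, hSdef, hCdef, transpose_sub, transpose_mul, hBt, hLt, hSxt, hSet,
        Matrix.mul_assoc, Matrix.neg_mul, Matrix.mul_neg, sub_eq_add_neg, add_comm]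
  have hdetU : ((fromBlocks B L (-L) B : Matrix (Fin m ⊕ Fin m) (Fin m ⊕ Fin m) ℝ)).det
      * ((fromBlocks B L (-L) B : Matrix (Fin m ⊕ Fin m) (Fin m ⊕ Fin m) ℝ)).det = 1 := by
    have := congrArg Matrix.det hU
    rwa [det_mul, det_transpose, det_one] at this
  have hdetM : (fromBlocks A S Sᵀ C : Matrix (Fin m ⊕ Fin m) (Fin m ⊕ Fin m) ℝ).det
      = Sx.det * Se.det := by
    rw [hM, det_mul, det_mul, det_transpose, det_fromBlocks_zero₂₁]
    linear_combination Sx.det * Se.det * hdetU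
  have : Invertible A := A.invertibleOfIsUnitDet (isUnit_iff_ne_zero.mpr hA.det_pos.ne')
  rw [det_fromBlocks₁₁, invOf_eq_nonsing_inv] at hdetM
  exact hdetM.symm
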